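/- (Corollary 1, second half) Let [n_1,…,n_s] be a multiset of integers ≥ 2 containing the element 2 at most once, and set n_I := lcm(n_1,…,n_s). Then every primitive n_I-th root of unity in ℂ is an eigenvalue of Φ_{[n_1,…,n_s]}, i.e. a root of χ_{[n_1,…,n_s]} in ℂ. -/

import Mathlib

open Matrix Polynomial

/-- The Coxeter matrix `Φ_[n]` of the linearly oriented quiver of type `A_{n-1}`:
the `(n-1) × (n-1)` integer matrix whose `(i,j)`-entry is `1` if `j = i + 1`
(for rows other than the last), whose last row has all entries `-1`, and whose
other entries are `0`. -/
def PhiA (n : ℕ) : Matrix (Fin (n - 1)) (Fin (n - 1)) ℤ :=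
  fun i j =>
    if (i : ℕ) = n - 2 then -1
    else if (j : ℕ) = (i : ℕ) + 1 then 1 else 0

/-- The Kronecker (tensor) product `Φ_{[n_1,…,n_s]} = Φ_{[n_1]} ⊗ ⋯ ⊗ Φ_{[n_s]}`,
realized on the index type `Π i, Fin (n i - 1)`. -/
def PhiProd {s : ℕ} (n : Fin s → ℕ) :
    Matrix ((i : Fin s) → Fin (n i - 1)) ((i : Fin s) → Fin (n i - 1)) ℤ :=
  fun x y => ∏ i, PhiA (n i) (x i) (y i)

/-- The characteristic polynomial `χ_{[n_1,…,n_s]} ∈ ℤ[X]` of `Φ_{[n_1,…,n_s]}`. -/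
noncomputable def Chi {s : ℕ} (n : Fin s → ℕ) : Polynomial ℤ :=
  (PhiProd n).charpoly

/-- The standard primitive complex `m`-th root of unity `exp(2π√-1/m)`. -/
noncomputable def zeta (m : ℕ) : ℂ := Complex.exp (2 * Real.pi * Complex.I / m)

lemma isCoprime_of_isUnit_zmod {x : ℤ} {k : ℕ} (hk : k ≠ 0) (h : IsUnit ((x : ZMod k))) :
    IsCoprime x (k : ℤ) := by
  haveI : NeZero k := ⟨hk⟩
  obtain ⟨u, hu⟩ := h
  set w : ℤ := (((u⁻¹ : (ZMod k)ˣ) : ZMod k).val : ℤ) with hw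
  have h1 : ((w * x - 1 : ℤ) : ZMod k) = 0 := by
    push_cast [hw]
    rw [ZMod.natCast_val, ZMod.cast_id, ← hu]
    simp
  rw [ZMod.intCast_zmod_eq_zero_iff_dvd] at h1
  obtain ⟨c, hc⟩ := h1
  exact ⟨w, -c, by linarith⟩

lemma isUnit_zmod_of_isCoprime {x : ℤ} {k : ℕ} (h : IsCoprime x (k : ℤ)) :
    IsUnit ((x : ZMod k)) := by
  obtain ⟨a, b, hab⟩ := h
  apply IsUnit.of_mul_eq_one ((a : ℤ) : ZMod k)
  have := congrArg (fun t : ℤ => (t : ZMod k)) hab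
  push_cast at this
  simpa [ZMod.natCast_self, mul_comm] using this

lemma int_crt (a b : ℤ) (p q : ℕ) (h : ((Nat.gcd p q : ℤ)) ∣ a - b) :
    ∃ x : ℤ, (p : ℤ) ∣ x - a ∧ (q : ℤ) ∣ x - b := by
  obtain ⟨k, hk⟩ := h
  have hg : (Nat.gcd p q : ℤ) = p * Int.gcdA p q + q * Int.gcdB p q := by
    have := Int.gcd_eq_gcd_ab (p : ℤ) (q : ℤ)
    simpa using this
  refine ⟨a - p * Int.gcdA p q * k, ⟨-(Int.gcdA p q * k), by ring⟩, ⟨Int.gcdB p q * k, ?_⟩⟩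
  have h2 : a - b = (p * Int.gcdA p q + q * Int.gcdB p q) * k := by rw [← hg]; exact hk
  linarith [h2]

lemma key_coprime_div {N' m N : ℕ} (hN : N ≠ 0) (hlcm : N = Nat.lcm N' m) :
    Nat.Coprime (N / N') (N / m) := by
  have hN' : N' ∣ N := hlcm ▸ Nat.dvd_lcm_left N' m
  have hm : m ∣ N := hlcm ▸ Nat.dvd_lcm_right N' m
  have he : N / N' * N' = N := Nat.div_mul_cancel hN'
  have hd : N / m * m = N := Nat.div_mul_cancel hm
  set e := N / N'; set d := N / m
  set g := Nat.gcd e d with hg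
  obtain ⟨e', he'⟩ : g ∣ e := Nat.gcd_dvd_left e d
  obtain ⟨d', hd'⟩ : g ∣ d := Nat.gcd_dvd_right e d
  have hg0 : g ≠ 0 := by
    rintro h0
    rw [h0, zero_mul] at he'
    rw [he', zero_mul] at he
    exact hN he.symm
  have hEq : e' * N' = d' * m := by
    apply Nat.eq_of_mul_eq_mul_left (Nat.pos_of_ne_zero hg0)
    rw [← mul_assoc, ← mul_assoc, ← he', ← hd', he, hd]
  have hNdvd : N ∣ e' * N' := by
    rw [hlcm]
    exact Nat.lcm_dvd ⟨e', mul_comm e' N'⟩ (hEq ▸ ⟨d', mul_comm d' m⟩)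
  have hdvdN : e' * N' ∣ N := ⟨g, by rw [← he]; rw [he']; ring⟩
  have h1 : e' * N' = N := Nat.dvd_antisymm hdvdN hNdvd
  have h2 : g * N = N := by nth_rewrite 1 [← h1]; rw [← he, he']; ring
  exact Nat.eq_of_mul_eq_mul_right (Nat.pos_of_ne_zero hN)
    (by rw [one_mul]; linarith [h2] : g * N = 1 * N)

lemma key_xy (N' m : ℕ) (hN'2 : 2 ≤ N') (hm3 : 3 ≤ m) (u : ℤ)
    (hu : IsCoprime u ((Nat.lcm N' m : ℕ) : ℤ)) :
    ∃ x y : ℤ, IsCoprime x (N' : ℤ) ∧ ¬ ((m : ℤ) ∣ y) ∧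
      ((Nat.lcm N' m / N' : ℕ) : ℤ) * x + ((Nat.lcm N' m / m : ℕ) : ℤ) * y = u := by
  set N := Nat.lcm N' m with hNdef
  have hN'0 : N' ≠ 0 := by omega
  have hm0 : m ≠ 0 := by omega
  have hN0 : N ≠ 0 := Nat.lcm_ne_zero hN'0 hm0
  have hdvdN' : N' ∣ N := Nat.dvd_lcm_left N' m
  have hdvdm : m ∣ N := Nat.dvd_lcm_right N' m
  set e := N / N' with hedef
  set d := N / m with hddef
  have he : e * N' = N := Nat.div_mul_cancel hdvdN'
  have hd : d * m = N := Nat.div_mul_cancel hdvdm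
  have hd0 : d ≠ 0 := by intro h; rw [h, zero_mul] at hd; exact hN0 hd.symm
  have hcop : Nat.Coprime e d := key_coprime_div hN0 rfl
  by_cases he1 : e = 1
  · -- case e = 1 : N' = N
    have hNN' : N' = N := by rw [← he, he1, one_mul]
    haveI : NeZero N := ⟨hN0⟩
    haveI : NeZero d := ⟨hd0⟩
    have hdN : d ∣ N := ⟨m, hd.symm⟩
    have hphi : Nat.totient d < Nat.totient N := by
      have h1 := Nat.totient_gcd_mul_totient_mul d m
      have hg0 : 0 < Nat.gcd d m := Nat.gcd_pos_of_pos_left m (Nat.pos_of_ne_zero hd0)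
      have hphig : 0 < (Nat.gcd d m).totient := Nat.totient_pos.mpr hg0
      have h2 : (Nat.gcd d m).totient * (d.totient * m.totient) ≤
          (Nat.gcd d m).totient * (d * m).totient := by
        calc (Nat.gcd d m).totient * (d.totient * m.totient)
            ≤ d.totient * m.totient * Nat.gcd d m := by
              rw [mul_comm]
              exact Nat.mul_le_mul_left _ (Nat.totient_le _)
          _ = (Nat.gcd d m).totient * (d * m).totient := h1.symm
      have h3 : d.totient * m.totient ≤ (d * m).totient :=
        Nat.le_of_mul_le_mul_left h2 hphig
      rw [hd] at h3
      have hm2 : 2 ≤ m.totient := by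
        obtain ⟨r, hr⟩ := Nat.totient_even (by omega : 2 < m)
        have hpos : 0 < m.totient := Nat.totient_pos.mpr (by omega)
        omega
      have hdpos : 0 < d.totient := Nat.totient_pos.mpr (Nat.pos_of_ne_zero hd0)
      nlinarith
    have hcard : Fintype.card (ZMod d)ˣ < Fintype.card (ZMod N)ˣ := by
      rw [ZMod.card_units_eq_totient, ZMod.card_units_eq_totient]; exact hphi
    have hnotinj : ¬ Function.Injective (ZMod.unitsMap hdN) := fun hinj =>
      absurd (Fintype.card_le_of_injective _ hinj) (not_le.mpr hcard)
    rw [Function.not_injective_iff] at hnotinj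
    obtain ⟨w1, w2, hfw, hww⟩ := hnotinj
    set w := w1 * w2⁻¹ with hwdef
    have hw1 : w ≠ 1 := by
      intro h; rw [hwdef, mul_inv_eq_one] at h; exact hww h
    have hfw1 : ZMod.unitsMap hdN w = 1 := by
      rw [hwdef, _root_.map_mul, _root_.map_inv, hfw, mul_inv_cancel]
    have huN : IsUnit ((u : ZMod N)) := isUnit_zmod_of_isCoprime hu
    set X := huN.unit * w with hXdef
    set x : ℤ := (((X : (ZMod N)ˣ) : ZMod N).val : ℤ) with hxdef
    have hxN : ((x : ZMod N)) = (X : ZMod N) := by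
      rw [hxdef]; push_cast; rw [ZMod.natCast_val, ZMod.cast_id]
    have hxcop : IsCoprime x (N' : ℤ) := by
      rw [hNN']
      exact isCoprime_of_isUnit_zmod hN0 (hxN ▸ X.isUnit)
    have hcast : ((x : ZMod d)) = ((u : ZMod d)) := by
      have h1 : ZMod.castHom hdN (ZMod d) ((x : ZMod N)) = ((x : ZMod d)) := map_intCast _ x
      have h2 : ZMod.castHom hdN (ZMod d) ((u : ZMod N)) = ((u : ZMod d)) := map_intCast _ u
      rw [← h1, ← h2, hxN]
      have h3 : (ZMod.unitsMap hdN X : ZMod d) = ZMod.castHom hdN (ZMod d) (X : ZMod N) := rfl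
      rw [← h3, hXdef, _root_.map_mul, hfw1, mul_one]
      have h4 : ((huN.unit : (ZMod N)ˣ) : ZMod N) = (u : ZMod N) := IsUnit.unit_spec huN
      have h5 : ((ZMod.unitsMap hdN huN.unit : (ZMod d)ˣ) : ZMod d)
          = ZMod.castHom hdN (ZMod d) ((huN.unit : ZMod N)) := rfl
      rw [h5, h4]
    have hdux : (d : ℤ) ∣ u - x := by
      have := (ZMod.intCast_eq_intCast_iff _ _ _).mp hcast
      exact this.dvd
    obtain ⟨y, hy⟩ := hdux
    refine ⟨x, y, hxcop, ?_, ?_⟩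
    · intro hmy
      obtain ⟨c, hc⟩ := hmy
      have hNd : (N : ℤ) ∣ u - x := ⟨c, by rw [hy, hc, ← hd]; push_cast; ring⟩
      have hxu : ((x : ZMod N)) = ((u : ZMod N)) := by
        rw [ZMod.intCast_eq_intCast_iff]
        exact (Int.modEq_iff_dvd.mpr hNd).symm.symm
      apply hw1
      have hXu : X = huN.unit := Units.ext (by rw [IsUnit.unit_spec, ← hxu, hxN])
      rw [hXdef] at hXu
      calc w = (huN.unit)⁻¹ * (huN.unit * w) := by group
        _ = (huN.unit)⁻¹ * huN.unit := by rw [hXu]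
        _ = 1 := by group
    · have heZ : ((e : ℕ) : ℤ) = 1 := by rw [he1]; norm_num
      rw [heZ, one_mul]
      linarith [hy]
  · -- case e ≥ 2
    have he0 : e ≠ 0 := by intro h; rw [h, zero_mul] at he; exact hN0 he.symm
    have he2 : 2 ≤ e := (Nat.one_le_iff_ne_zero.mpr he0).lt_of_ne (Ne.symm he1)
    haveI : NeZero N' := ⟨hN'0⟩
    have hcopZ : IsCoprime (e : ℤ) (d : ℤ) := Nat.isCoprime_iff_coprime.mpr hcop
    obtain ⟨a, c, hac⟩ := hcopZ
    set x₀ : ℤ := a * u with hx0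
    set g := Nat.gcd d N' with hgdef
    have hgd : (g : ℤ) ∣ (d : ℤ) := Int.natCast_dvd_natCast.mpr (Nat.gcd_dvd_left d N')
    have hgN' : g ∣ N' := Nat.gcd_dvd_right d N'
    have hg0 : g ≠ 0 := fun h => hN'0 (Nat.eq_zero_of_gcd_eq_zero_right h)
    have hax : IsCoprime x₀ (g : ℤ) := by
      apply IsCoprime.mul_left
      · have had : IsCoprime a (d : ℤ) := ⟨e, c, by linarith [hac]⟩
        exact had.of_isCoprime_of_dvd_right hgd
      · have hgN : (g : ℤ) ∣ (N : ℤ) := Int.natCast_dvd_natCast.mpr (hgN'.trans hdvdN')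
        exact hu.of_isCoprime_of_dvd_right hgN
    have hx0unit : IsUnit ((x₀ : ZMod g)) := isUnit_zmod_of_isCoprime hax
    obtain ⟨X, hX⟩ := ZMod.unitsMap_surjective hgN' hx0unit.unit
    set x₁ : ℤ := (((X : (ZMod N')ˣ) : ZMod N').val : ℤ) with hx1
    have hx1N' : ((x₁ : ZMod N')) = (X : ZMod N') := by
      rw [hx1]; push_cast; rw [ZMod.natCast_val, ZMod.cast_id]
    have hgx : (g : ℤ) ∣ x₁ - x₀ := by
      have h1 : ((x₁ : ZMod g)) = ((x₀ : ZMod g)) := by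
        have h2 := congrArg (fun t : (ZMod g)ˣ => (t : ZMod g)) hX
        simp only [ZMod.unitsMap_def, Units.coe_map, MonoidHom.coe_coe] at h2
        rw [IsUnit.unit_spec] at h2
        calc ((x₁ : ZMod g)) = ZMod.castHom hgN' (ZMod g) ((x₁ : ZMod N')) :=
              (map_intCast _ _).symm
          _ = _ := by rw [hx1N']; exact h2
      exact ((ZMod.intCast_eq_intCast_iff _ _ _).mp h1.symm).dvd
    obtain ⟨x, hxN', hxd⟩ := int_crt x₁ x₀ N' d (by rwa [Nat.gcd_comm N' d])
    have hxcop : IsCoprime x (N' : ℤ) := by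
      apply isCoprime_of_isUnit_zmod hN'0
      have hxx : ((x : ZMod N')) = ((x₁ : ZMod N')) := by
        rw [ZMod.intCast_eq_intCast_iff]
        exact (Int.ModEq.symm (Int.modEq_iff_dvd.mpr hxN'))
      rw [hxx, hx1N']; exact X.isUnit
    have hdue : (d : ℤ) ∣ u - (e : ℤ) * x := by
      have h1 : u - (e : ℤ) * x = (c * u) * d + (e : ℤ) * (x₀ - x) := by
        rw [hx0]; linear_combination u * hac.symm
      rw [h1]
      exact dvd_add ⟨c * u, by ring⟩ ((dvd_sub_comm.mp hxd).mul_left _)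
    obtain ⟨y, hy⟩ := hdue
    refine ⟨x, y, hxcop, ?_, by linarith [hy]⟩
    intro hmy
    obtain ⟨c', hc'⟩ := hmy
    have hNdvd : (N : ℤ) ∣ u - (e : ℤ) * x := ⟨c', by rw [hy, hc', ← hd]; push_cast; ring⟩
    have heN : (e : ℤ) ∣ (N : ℤ) := ⟨N', by exact_mod_cast he.symm⟩
    have heu : (e : ℤ) ∣ u := by
      have h1 : (e : ℤ) ∣ u - (e : ℤ) * x := heN.trans hNdvd
      have h2 : u = (u - (e : ℤ) * x) + (e : ℤ) * x := by ring
      rw [h2]; exact dvd_add h1 ⟨x, rfl⟩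
    have hue : IsCoprime u ((e : ℕ) : ℤ) := hu.of_isCoprime_of_dvd_right heN
    have hunit : IsUnit ((e : ℕ) : ℤ) := hue.isUnit_of_dvd' heu dvd_rfl
    rw [Int.isUnit_iff] at hunit
    rcases hunit with h | h <;> omega

lemma exists_b : ∀ (s : ℕ) (n : Fin (s + 1) → ℕ), (∀ i, 2 ≤ n i) →
    (Finset.univ.filter (fun i => n i = 2)).card ≤ 1 → ∀ u : ℤ,
    IsCoprime u ((Finset.univ.lcm n : ℕ) : ℤ) →
    ∃ b : Fin (s + 1) → ℤ, (∀ i, ¬ ((n i : ℤ) ∣ b i)) ∧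
      ((Finset.univ.lcm n : ℕ) : ℤ) ∣ (∑ i, b i * ((Finset.univ.lcm n / n i : ℕ) : ℤ)) - u := by
  intro s
  induction s with
  | zero =>
    intro n hn h2 u hu
    have hN : Finset.univ.lcm n = n 0 := by
      rw [show (Finset.univ : Finset (Fin 1)) = {0} from rfl]
      simp [Finset.lcm_singleton]
    refine ⟨fun _ => u, fun i => ?_, ?_⟩
    · obtain rfl : i = (0 : Fin 1) := Fin.fin_one_eq_zero i
      intro hdvd
      have hun : IsUnit ((n 0 : ℤ)) := by
        rw [hN] at hu
        exact hu.symm.isUnit_of_dvd' dvd_rfl hdvd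
      rw [Int.isUnit_iff] at hun
      have h2' := hn 0
      rcases hun with h | h <;> omega
    · rw [hN, Fin.sum_univ_one, Nat.div_self (by have := hn 0; omega : 0 < n 0)]
      push_cast
      simp
  | succ s ih =>
    intro n hn h2 u hu
    have hj : ∃ j, 3 ≤ n j := by
      by_contra hcon
      push_neg at hcon
      have hall : ∀ i, n i = 2 := fun i => le_antisymm (by have := hcon i; omega) (hn i)
      have hfil : (Finset.univ.filter (fun i => n i = 2)) = Finset.univ :=
        Finset.filter_true_of_mem (fun i _ => hall i)
      rw [hfil, Finset.card_univ, Fintype.card_fin] at h2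
      omega
    obtain ⟨j, hj3⟩ := hj
    set n' : Fin (s + 1) → ℕ := fun k => n (j.succAbove k) with hn'def
    set N := Finset.univ.lcm n with hNdef
    set N' := Finset.univ.lcm n' with hN'def
    have hn'2 : ∀ k, 2 ≤ n' k := fun k => hn _
    have hdvdN : ∀ i, n i ∣ N := fun i => Finset.dvd_lcm (Finset.mem_univ i)
    have hdvdN' : ∀ k, n' k ∣ N' := fun k => Finset.dvd_lcm (Finset.mem_univ k)
    have hN0 : N ≠ 0 := by
      intro h0
      rw [hNdef, Finset.lcm_eq_zero_iff] at h0
      obtain ⟨i, -, hi⟩ := h0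
      have := hn i
      omega
    have hN'0 : N' ≠ 0 := by
      intro h0
      rw [hN'def, Finset.lcm_eq_zero_iff] at h0
      obtain ⟨k, -, hk⟩ := h0
      have := hn'2 k
      omega
    have hlcm : N = Nat.lcm N' (n j) := by
      apply Nat.dvd_antisymm
      · rw [hNdef]
        apply Finset.lcm_dvd
        intro i _
        rcases eq_or_ne i j with rfl | hne
        · exact Nat.dvd_lcm_right N' (n i)
        · obtain ⟨k, rfl⟩ := Fin.exists_succAbove_eq hne
          exact (hdvdN' k).trans (Nat.dvd_lcm_left N' (n j))
      · exact Nat.lcm_dvd (Finset.lcm_dvd fun k _ => hdvdN _) (hdvdN j)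
    have hN'2 : 2 ≤ N' := by
      have h1 := Nat.le_of_dvd (Nat.pos_of_ne_zero hN'0) (hdvdN' 0)
      have := hn'2 0
      omega
    have hu' : IsCoprime u ((Nat.lcm N' (n j) : ℕ) : ℤ) := by rw [← hlcm]; exact hu
    obtain ⟨x, y, hxcop, hmy, hxy⟩ := key_xy N' (n j) hN'2 hj3 u hu'
    have h2' : (Finset.univ.filter (fun k => n' k = 2)).card ≤ 1 := by
      refine le_trans ?_ h2
      have hinj : Set.InjOn (fun k => j.succAbove k)
          ((Finset.univ.filter (fun k => n' k = 2)) : Finset (Fin (s + 1))) :=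
        fun a _ b _ h => Fin.succAbove_right_injective h
      calc (Finset.univ.filter (fun k => n' k = 2)).card
          = ((Finset.univ.filter (fun k => n' k = 2)).image
              (fun k => j.succAbove k)).card := (Finset.card_image_of_injOn hinj).symm
        _ ≤ (Finset.univ.filter (fun i => n i = 2)).card := by
            apply Finset.card_le_card
            intro i hi
            simp only [Finset.mem_image, Finset.mem_filter, Finset.mem_univ, true_and] at hi ⊢
            obtain ⟨k, hk, rfl⟩ := hi
            exact hk
    obtain ⟨b', hb'1, hb'2⟩ := ih n' hn'2 h2' x hxcop
    refine ⟨j.insertNth y b', ?_, ?_⟩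
    · intro i
      rcases eq_or_ne i j with rfl | hne
      · rw [Fin.insertNth_apply_same]; exact hmy
      · obtain ⟨k, rfl⟩ := Fin.exists_succAbove_eq hne
        rw [Fin.insertNth_apply_succAbove]
        exact hb'1 k
    · have heN : N / N' * N' = N := Nat.div_mul_cancel (hlcm ▸ Nat.dvd_lcm_left N' (n j))
      have hsum : ∑ i, (j.insertNth y b' : Fin (s + 2) → ℤ) i * ((N / n i : ℕ) : ℤ)
          = y * ((N / n j : ℕ) : ℤ)
            + ((N / N' : ℕ) : ℤ) * ∑ k, b' k * ((N' / n' k : ℕ) : ℤ) := by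
        rw [Fin.sum_univ_succAbove (fun i => (j.insertNth y b' : Fin (s + 2) → ℤ) i * ((N / n i : ℕ) : ℤ)) j]
        congr 1
        · rw [Fin.insertNth_apply_same]
        · rw [Finset.mul_sum]
          apply Finset.sum_congr rfl
          intro k _
          rw [Fin.insertNth_apply_succAbove]
          have hsplit : N / n' k = N / N' * (N' / n' k) := by
            rw [← heN, Nat.mul_div_assoc (N / N') (hdvdN' k)]
            congr 1
            rw [heN]
          rw [hsplit]
          push_cast
          ring
      rw [hsum]
      obtain ⟨t, ht⟩ := hb'2
      refine ⟨t, ?_⟩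
      rw [← hlcm] at hxy
      have heNZ : ((N / N' : ℕ) : ℤ) * ((N' : ℕ) : ℤ) = ((N : ℕ) : ℤ) := by
        exact_mod_cast heN
      linear_combination ((N / N' : ℕ) : ℤ) * ht + hxy + t * heNZ

lemma zpow_sum_eq {z : ℂ} (hz : z ≠ 0) {ι : Type*} (s : Finset ι) (c : ι → ℤ) :
    z ^ (∑ i ∈ s, c i) = ∏ i ∈ s, z ^ c i := by
  classical
  induction s using Finset.induction with
  | empty => simp
  | insert _ _ h ih => rw [Finset.sum_insert h, Finset.prod_insert h, zpow_add₀ hz, ih]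

lemma phiA_row_sum {n : ℕ} (hn : 2 ≤ n) {ζ : ℂ} (hζn : ζ ^ n = 1) (hζ1 : ζ ≠ 1)
    (x : Fin (n - 1)) :
    ∑ y : Fin (n - 1), ((PhiA n x y : ℤ) : ℂ) * ζ ^ (y : ℕ) = ζ * ζ ^ (x : ℕ) := by
  have hsum0 : ∑ j ∈ Finset.range n, ζ ^ j = 0 := by
    rw [geom_sum_eq hζ1, hζn, sub_self, zero_div]
  have hsum : ∑ j ∈ Finset.range (n - 1), ζ ^ j = -ζ ^ (n - 1) := by
    have h1 : n = (n - 1) + 1 := by omega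
    rw [h1, Finset.sum_range_succ] at hsum0
    linear_combination hsum0
  by_cases hx : (x : ℕ) = n - 2
  · have hPhi : ∀ y : Fin (n - 1), ((PhiA n x y : ℤ) : ℂ) = -1 := by
      intro y; simp [PhiA, hx]
    calc ∑ y : Fin (n - 1), ((PhiA n x y : ℤ) : ℂ) * ζ ^ (y : ℕ)
        = ∑ y : Fin (n - 1), -ζ ^ (y : ℕ) := by
          exact Finset.sum_congr rfl fun y _ => by rw [hPhi y]; ring
      _ = -∑ j ∈ Finset.range (n - 1), ζ ^ j := by
          rw [← Fin.sum_univ_eq_sum_range (fun j => ζ ^ j) (n - 1)]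
          simp
      _ = ζ ^ (n - 1) := by rw [hsum]; ring
      _ = ζ * ζ ^ (x : ℕ) := by
          rw [hx, ← pow_succ']
          congr 1
          omega
  · have hxlt : (x : ℕ) + 1 < n - 1 := by have := x.isLt; omega
    set y₀ : Fin (n - 1) := ⟨(x : ℕ) + 1, hxlt⟩ with hy₀
    have hPhi : ∀ y : Fin (n - 1), ((PhiA n x y : ℤ) : ℂ) = if y = y₀ then 1 else 0 := by
      intro y
      by_cases h : (y : ℕ) = (x : ℕ) + 1 <;>
        simp [PhiA, hx, h, hy₀, Fin.ext_iff]
    calc ∑ y : Fin (n - 1), ((PhiA n x y : ℤ) : ℂ) * ζ ^ (y : ℕ)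
        = ∑ y : Fin (n - 1), (if y = y₀ then (1 : ℂ) else 0) * ζ ^ (y : ℕ) := by
          exact Finset.sum_congr rfl fun y _ => by rw [hPhi y]
      _ = ζ ^ ((y₀ : Fin (n - 1)) : ℕ) := by
          simp only [ite_mul, one_mul, zero_mul]
          rw [Finset.sum_ite_eq' Finset.univ y₀ (fun y : Fin (n - 1) => ζ ^ (y : ℕ))]
          simp
      _ = ζ * ζ ^ (x : ℕ) := by
          rw [hy₀]
          show ζ ^ ((x : ℕ) + 1) = _
          rw [pow_succ]
          ring

lemma charpoly_isRoot_of_eigen {ι : Type} [Fintype ι] [DecidableEq ι] (M : Matrix ι ι ℂ)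
    (z : ℂ) (v : ι → ℂ) (hv : v ≠ 0) (h : M.mulVec v = z • v) : M.charpoly.IsRoot z := by
  have hdet : ((z • (1 : Matrix ι ι ℂ) - M)).det = 0 := by
    rw [← Matrix.exists_mulVec_eq_zero_iff]
    refine ⟨v, hv, ?_⟩
    rw [Matrix.sub_mulVec, Matrix.smul_mulVec, Matrix.one_mulVec, h, sub_self]
  have heval : M.charpoly.eval z = ((z • (1 : Matrix ι ι ℂ) - M)).det := by
    rw [Matrix.charpoly]
    rw [← Polynomial.coe_evalRingHom, RingHom.map_det]
    congr 1
    ext i j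
    rcases eq_or_ne i j with rfl | hij
    · simp [Matrix.charmatrix_apply_eq, Matrix.one_apply]
    · simp [Matrix.charmatrix_apply_ne _ _ _ hij, Matrix.one_apply_ne hij]
  rw [Polynomial.IsRoot, heval, hdet]

theorem primitiveRoot_isRoot_chi {s : ℕ} (hs : 0 < s) (n : Fin s → ℕ) (hn : ∀ i, 2 ≤ n i)
    (h2 : (Finset.univ.filter (fun i => n i = 2)).card ≤ 1) :
    ∀ z : ℂ, IsPrimitiveRoot z (Finset.univ.lcm n) →
      ((Chi n).map (Int.castRingHom ℂ)).IsRoot z := by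
  intro z hz
  obtain ⟨s', rfl⟩ : ∃ s', s = s' + 1 := ⟨s - 1, by omega⟩
  set N := Finset.univ.lcm n with hNdef
  have hdvdN : ∀ i, n i ∣ N := fun i => Finset.dvd_lcm (Finset.mem_univ i)
  have hN0 : N ≠ 0 := by
    intro h0
    rw [hNdef, Finset.lcm_eq_zero_iff] at h0
    obtain ⟨i, -, hi⟩ := h0
    have := hn i; omega
  have hz0 : z ≠ 0 := hz.ne_zero hN0
  obtain ⟨b, hb1, hb2⟩ := exists_b s' n hn h2 1 isCoprime_one_left
  set c : Fin (s' + 1) → ℤ := fun i => ((N / n i : ℕ) : ℤ) * b i with hc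
  set ζ : Fin (s' + 1) → ℂ := fun i => z ^ (c i) with hζ
  have hζ0 : ∀ i, ζ i ≠ 0 := fun i => zpow_ne_zero _ hz0
  have hNsplit : ∀ i, (N / n i) * n i = N := fun i => Nat.div_mul_cancel (hdvdN i)
  have hζn : ∀ i, ζ i ^ (n i) = 1 := by
    intro i
    rw [hζ]
    show (z ^ c i) ^ (n i) = 1
    rw [← zpow_natCast, ← _root_.zpow_mul]
    apply (hz.zpow_eq_one_iff_dvd _).mpr
    refine ⟨b i, ?_⟩
    have hNeq : ((N : ℕ) : ℤ) = ((N / n i : ℕ) : ℤ) * ((n i : ℕ) : ℤ) := by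
      exact_mod_cast (hNsplit i).symm
    simp only [hc, hNeq]
    ring
  have hζ1 : ∀ i, ζ i ≠ 1 := by
    intro i h1
    rw [hζ] at h1
    have hdvd := (hz.zpow_eq_one_iff_dvd _).mp h1
    have hne : ((N / n i : ℕ) : ℤ) ≠ 0 := by
      intro h0
      have h0' : (N / n i) = 0 := by exact_mod_cast h0
      have hns := hNsplit i
      rw [h0', zero_mul] at hns
      exact hN0 hns.symm
    apply hb1 i
    have hNeq : ((N : ℕ) : ℤ) = ((N / n i : ℕ) : ℤ) * ((n i : ℕ) : ℤ) := by
      exact_mod_cast (hNsplit i).symm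
    rw [hNeq, hc] at hdvd
    exact (mul_dvd_mul_iff_left hne).mp hdvd
  have hprod : ∏ i, ζ i = z := by
    rw [hζ]
    show ∏ i, z ^ c i = z
    rw [← zpow_sum_eq hz0 Finset.univ c]
    obtain ⟨t, ht⟩ := hb2
    have hsc : ∑ i, c i = 1 + (N : ℤ) * t := by
      have hcomm : ∑ i, c i = ∑ i, b i * ((N / n i : ℕ) : ℤ) :=
        Finset.sum_congr rfl fun i _ => mul_comm _ _
      rw [hcomm]
      linarith [ht]
    have hzN : z ^ ((N : ℕ) : ℤ) = 1 := (hz.zpow_eq_one_iff_dvd _).mpr dvd_rfl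
    rw [hsc, zpow_add₀ hz0, zpow_one, _root_.zpow_mul, hzN, _root_.one_zpow, mul_one]
  have hnonped : ∀ i, 0 < n i - 1 := fun i => by have := hn i; omega
  set v : ((i : Fin (s' + 1)) → Fin (n i - 1)) → ℂ :=
    fun x => ∏ i, ζ i ^ ((x i : ℕ)) with hv
  set M := (PhiProd n).map (Int.castRingHom ℂ) with hM
  have heig : M.mulVec v = z • v := by
    funext x
    show ∑ y, M x y * v y = z • (v x)
    have hMxy : ∀ y, M x y * v y
        = ∏ i, (((PhiA (n i) (x i) (y i) : ℤ) : ℂ) * ζ i ^ ((y i : ℕ))) := by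
      intro y
      rw [hM, hv]
      show ((PhiProd n x y : ℤ) : ℂ) * ∏ i, ζ i ^ ((y i : ℕ)) = _
      rw [PhiProd]
      push_cast
      rw [← Finset.prod_mul_distrib]
    calc ∑ y, M x y * v y
        = ∑ y : ((i : Fin (s' + 1)) → Fin (n i - 1)),
            ∏ i, (((PhiA (n i) (x i) (y i) : ℤ) : ℂ) * ζ i ^ ((y i : ℕ))) :=
          Finset.sum_congr rfl fun y _ => hMxy y
      _ = ∏ i, ∑ yi : Fin (n i - 1), ((PhiA (n i) (x i) yi : ℤ) : ℂ) * ζ i ^ ((yi : ℕ)) := by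
          rw [Finset.prod_univ_sum]
          rw [Fintype.piFinset_univ]
      _ = ∏ i, (ζ i * ζ i ^ ((x i : ℕ))) :=
          Finset.prod_congr rfl fun i _ => phiA_row_sum (hn i) (hζn i) (hζ1 i) (x i)
      _ = (∏ i, ζ i) * ∏ i, ζ i ^ ((x i : ℕ)) := Finset.prod_mul_distrib
      _ = z • (v x) := by rw [hprod, hv]; rfl
  have hvne : v ≠ 0 := by
    intro h0
    have hx0 : v (fun i => ⟨0, hnonped i⟩) = 0 := by rw [h0]; rfl
    rw [hv] at hx0
    exact (Finset.prod_ne_zero_iff.mpr (fun i _ => pow_ne_zero _ (hζ0 i))) hx0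
  have hchi : ((Chi n).map (Int.castRingHom ℂ)) = M.charpoly := by
    rw [Chi, hM, Matrix.charpoly_map]
  rw [hchi]
  exact charpoly_isRoot_of_eigen M z v hvne heig
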